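/- Let K be a field and let L1 and L2 be finite Galois extensions of K contained in a common extension field Ω of K, with Galois groups G1 = Gal(L1/K) and G2 = Gal(L2/K). If G1 and G2 are disjoint, then the natural restriction homomorphism Gal(L1·L2 / K) → Gal(L1/K) × Gal(L2/K) from the Galois group of the compositum L1·L2 is an isomorphism; in particular, L1 and L2 are linearly disjoint over K, that is, [L1·L2 : K] = [L1 : K]·[L2 : K]. -/

import Mathlib

set_option synthInstance.maxHeartbeats 1000000
set_option maxHeartbeats 1000000

open Function IntermediateField

universe u

/-- Finite groups `G1` and `G2` are *disjoint* if every group `Q` admitting surjective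
homomorphisms from both `G1` and `G2` is trivial. -/
def GroupsDisjoint (G1 : Type u) (G2 : Type u) [Group G1] [Group G2] : Prop :=
  ∀ (Q : Type u) [Group Q] (φ1 : G1 →* Q) (φ2 : G2 →* Q),
    Surjective φ1 → Surjective φ2 → Subsingleton Q

/-- Let `L1`, `L2` be finite Galois extensions of `K` inside a common extension `Ω`, with
disjoint Galois groups `Gal(L1/K)` and `Gal(L2/K)`. Then the natural restriction homomorphism
`Gal(L1⬝L2/K) → Gal(L1/K) × Gal(L2/K)` from the Galois group of the compositum is an
isomorphism (i.e. bijective); in particular `L1` and `L2` are linearly disjoint over `K`: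
`[L1⬝L2 : K] = [L1 : K]⬝[L2 : K]`. -/
lemma GroupsDisjoint.subgroup_prod_eq_top {G1 G2 : Type u} [Group G1] [Group G2]
    (hdisj : GroupsDisjoint G1 G2) (H : Subgroup (G1 × G2))
    (h1 : ∀ g1 : G1, ∃ g2, (g1, g2) ∈ H) (h2 : ∀ g2 : G2, ∃ g1, (g1, g2) ∈ H) :
    H = ⊤ := by
  let N2 : Subgroup G2 := H.comap (MonoidHom.inr G1 G2)
  have memN2 : ∀ g2 : G2, g2 ∈ N2 ↔ ((1 : G1), g2) ∈ H := fun g2 => Iff.rfl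
  haveI hN2 : N2.Normal := by
    constructor
    intro n hn g
    obtain ⟨g1, hg1⟩ := h2 g
    have hmem := H.mul_mem (H.mul_mem hg1 ((memN2 n).mp hn)) (H.inv_mem hg1)
    rw [memN2]
    have : ((1 : G1), g * n * g⁻¹) = (g1, g) * ((1 : G1), n) * (g1, g)⁻¹ := by
      ext <;> simp [mul_assoc]
    rw [this]; exact hmem
  choose c hc using h1
  have key : ∀ g1 a, (g1, a) ∈ H → (QuotientGroup.mk a : G2 ⧸ N2) = QuotientGroup.mk (c g1) := by
    intro g1 a ha
    rw [QuotientGroup.eq]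
    rw [memN2]
    have : ((1 : G1), a⁻¹ * c g1) = (g1, a)⁻¹ * (g1, c g1) := by ext <;> simp
    rw [this]; exact H.mul_mem (H.inv_mem ha) (hc g1)
  let φ1 : G1 →* G2 ⧸ N2 :=
    { toFun := fun g1 => QuotientGroup.mk (c g1)
      map_one' := by
        have h11 : ((1 : G1), (1 : G2)) ∈ H := H.one_mem
        have := key 1 1 h11
        show (QuotientGroup.mk (c 1) : G2 ⧸ N2) = 1
        rw [← this]; rfl
      map_mul' := by
        intro g h
        have hm : (g * h, c g * c h) ∈ H := H.mul_mem (hc g) (hc h)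
        have := key (g * h) (c g * c h) hm
        show (QuotientGroup.mk (c (g * h)) : G2 ⧸ N2) = QuotientGroup.mk (c g) * QuotientGroup.mk (c h)
        rw [← this, QuotientGroup.mk_mul] }
  have hφ1 : Surjective φ1 := by
    intro q
    obtain ⟨a, rfl⟩ := QuotientGroup.mk_surjective q
    obtain ⟨g1, hg1⟩ := h2 a
    exact ⟨g1, (key g1 a hg1).symm⟩
  haveI hQ : Subsingleton (G2 ⧸ N2) :=
    hdisj _ φ1 (QuotientGroup.mk' N2) hφ1 (QuotientGroup.mk'_surjective N2)
  have hN2top : ∀ g2 : G2, ((1 : G1), g2) ∈ H := by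
    intro g2
    rw [← memN2]
    rw [← QuotientGroup.eq_one_iff]
    exact Subsingleton.elim _ _
  rw [eq_top_iff]
  rintro ⟨g1, g2⟩ -
  have ha := hc g1
  have hmem := H.mul_mem ha (hN2top ((c g1)⁻¹ * g2))
  have : (g1, g2) = (g1, c g1) * ((1 : G1), (c g1)⁻¹ * g2) := by ext <;> simp
  rw [this]; exact hmem

theorem galois_compositum_of_disjoint_groups {K Ω : Type u} [Field K] [Field Ω] [Algebra K Ω]
    (L1 L2 : IntermediateField K Ω)
    [FiniteDimensional K L1] [FiniteDimensional K L2]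
    [IsGalois K L1] [IsGalois K L2]
    (hdisj : GroupsDisjoint (L1 ≃ₐ[K] L1) (L2 ≃ₐ[K] L2)) :
    letI : Algebra ↥L1 ↥(L1 ⊔ L2) :=
      (IntermediateField.inclusion (le_sup_left : L1 ≤ L1 ⊔ L2)).toAlgebra
    letI : Algebra ↥L2 ↥(L1 ⊔ L2) :=
      (IntermediateField.inclusion (le_sup_right : L2 ≤ L1 ⊔ L2)).toAlgebra
    haveI : IsScalarTower K ↥L1 ↥(L1 ⊔ L2) :=
      IsScalarTower.of_algebraMap_eq fun x => rfl
    haveI : IsScalarTower K ↥L2 ↥(L1 ⊔ L2) :=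
      IsScalarTower.of_algebraMap_eq fun x => rfl
    Bijective (fun σ : ↥(L1 ⊔ L2) ≃ₐ[K] ↥(L1 ⊔ L2) =>
        (AlgEquiv.restrictNormalHom (F := K) (K₁ := ↥(L1 ⊔ L2)) ↥L1 σ,
         AlgEquiv.restrictNormalHom (F := K) (K₁ := ↥(L1 ⊔ L2)) ↥L2 σ)) ∧
      Module.finrank K ↥(L1 ⊔ L2) = Module.finrank K ↥L1 * Module.finrank K ↥L2 := by
  letI : Algebra ↥L1 ↥(L1 ⊔ L2) :=
    (IntermediateField.inclusion (le_sup_left : L1 ≤ L1 ⊔ L2)).toAlgebra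
  letI : Algebra ↥L2 ↥(L1 ⊔ L2) :=
    (IntermediateField.inclusion (le_sup_right : L2 ≤ L1 ⊔ L2)).toAlgebra
  haveI : IsScalarTower K ↥L1 ↥(L1 ⊔ L2) :=
    IsScalarTower.of_algebraMap_eq fun x => rfl
  haveI : IsScalarTower K ↥L2 ↥(L1 ⊔ L2) :=
    IsScalarTower.of_algebraMap_eq fun x => rfl
  haveI : IsGalois K ↥(L1 ⊔ L2) := ⟨⟩
  set f : (↥(L1 ⊔ L2) ≃ₐ[K] ↥(L1 ⊔ L2)) →* (L1 ≃ₐ[K] L1) × (L2 ≃ₐ[K] L2) :=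
    (AlgEquiv.restrictNormalHom (F := K) (K₁ := ↥(L1 ⊔ L2)) ↥L1).prod
      (AlgEquiv.restrictNormalHom (F := K) (K₁ := ↥(L1 ⊔ L2)) ↥L2) with hf
  set E1 : IntermediateField K ↥(L1 ⊔ L2) := restrict (le_sup_left : L1 ≤ L1 ⊔ L2) with hE1
  set E2 : IntermediateField K ↥(L1 ⊔ L2) := restrict (le_sup_right : L2 ≤ L1 ⊔ L2) with hE2
  have hsup : E1 ⊔ E2 = ⊤ := by
    apply lift_injective (L1 ⊔ L2)
    show map (L1 ⊔ L2).val (E1 ⊔ E2) = _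
    rw [IntermediateField.map_sup]
    show lift E1 ⊔ lift E2 = lift ⊤
    rw [hE1, hE2, lift_restrict, lift_restrict, lift_top]
  have hinj : Injective f := by
    rw [injective_iff_map_eq_one]
    intro σ hσ
    have h1 : σ.restrictNormal ↥L1 = 1 := congrArg Prod.fst hσ
    have h2 : σ.restrictNormal ↥L2 = 1 := congrArg Prod.snd hσ
    have hfix1 : σ ∈ E1.fixingSubgroup := by
      rw [IntermediateField.mem_fixingSubgroup_iff]
      intro y hy
      have hy1 : y.1 ∈ L1 := (mem_restrict _ y).mp hy
      have hcomm := AlgEquiv.restrictNormal_commutes σ ↥L1 ⟨y.1, hy1⟩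
      rw [h1] at hcomm
      have hyeq : algebraMap ↥L1 ↥(L1 ⊔ L2) ⟨y.1, hy1⟩ = y := rfl
      rw [hyeq] at hcomm
      have hc := hcomm.symm; simp at hc; exact hc.trans hyeq
    have hfix2 : σ ∈ E2.fixingSubgroup := by
      rw [IntermediateField.mem_fixingSubgroup_iff]
      intro y hy
      have hy2 : y.1 ∈ L2 := (mem_restrict _ y).mp hy
      have hcomm := AlgEquiv.restrictNormal_commutes σ ↥L2 ⟨y.1, hy2⟩
      rw [h2] at hcomm
      have hyeq : algebraMap ↥L2 ↥(L1 ⊔ L2) ⟨y.1, hy2⟩ = y := rfl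
      rw [hyeq] at hcomm
      have hc := hcomm.symm; simp at hc; exact hc.trans hyeq
    have hcl : Subgroup.closure {σ} ≤ E1.fixingSubgroup :=
      (Subgroup.closure_le _).mpr (Set.singleton_subset_iff.mpr hfix1)
    have hcl2 : Subgroup.closure {σ} ≤ E2.fixingSubgroup :=
      (Subgroup.closure_le _).mpr (Set.singleton_subset_iff.mpr hfix2)
    have hle1 : E1 ≤ fixedField (Subgroup.closure {σ}) :=
      (IntermediateField.le_iff_le _ _).mpr hcl
    have hle2 : E2 ≤ fixedField (Subgroup.closure {σ}) :=
      (IntermediateField.le_iff_le _ _).mpr hcl2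
    have htop : (⊤ : IntermediateField K ↥(L1 ⊔ L2)) ≤ fixedField (Subgroup.closure {σ}) :=
      hsup ▸ sup_le hle1 hle2
    have hmem : σ ∈ (⊤ : IntermediateField K ↥(L1 ⊔ L2)).fixingSubgroup :=
      (IntermediateField.le_iff_le _ _).mp htop (Subgroup.subset_closure rfl)
    have hfix := (IntermediateField.mem_fixingSubgroup_iff _ σ).mp hmem
    ext x
    exact congrArg Subtype.val (hfix x trivial)
  have hsurj : Surjective f := by
    rw [← MonoidHom.range_eq_top]
    apply hdisj.subgroup_prod_eq_top
    · intro g1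
      obtain ⟨σ, hσ⟩ := AlgEquiv.restrictNormalHom_surjective (K₁ := ↥L1)
        (E := ↥(L1 ⊔ L2)) (F := K) g1
      exact ⟨AlgEquiv.restrictNormalHom (F := K) (K₁ := ↥(L1 ⊔ L2)) ↥L2 σ,
        ⟨σ, by rw [hf]; exact Prod.ext hσ rfl⟩⟩
    · intro g2
      obtain ⟨σ, hσ⟩ := AlgEquiv.restrictNormalHom_surjective (K₁ := ↥L2)
        (E := ↥(L1 ⊔ L2)) (F := K) g2
      exact ⟨AlgEquiv.restrictNormalHom (F := K) (K₁ := ↥(L1 ⊔ L2)) ↥L1 σ,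
        ⟨σ, by rw [hf]; exact Prod.ext rfl hσ⟩⟩
  have hbij : Bijective f := ⟨hinj, hsurj⟩
  refine ⟨hbij, ?_⟩
  rw [← IsGalois.card_aut_eq_finrank K ↥(L1 ⊔ L2), ← IsGalois.card_aut_eq_finrank K ↥L1,
    ← IsGalois.card_aut_eq_finrank K ↥L2, ← Nat.card_prod]
  exact Nat.card_eq_of_bijective f hbij
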